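/- Let f : ℝ^d → ℝ be convex and differentiable. If f(y₂) ≤ f(y₁) + ⟨∇f(y₁), y₂ − y₁⟩ + (L/2)‖y₁ − y₂‖² for all y₁, y₂ ∈ ℝ^d, then ∇f is L-Lipschitz continuous. -/

import Mathlib

open RealInnerProductSpace

lemma inner_gradient_eq_fderiv {d : ℕ} (f : EuclideanSpace ℝ (Fin d) → ℝ)
    (x v : EuclideanSpace ℝ (Fin d)) :
    ⟪gradient f x, v⟫ = fderiv ℝ f x v := by
  simp only [gradient]
  exact InnerProductSpace.toDual_symm_apply

lemma convex_lower_bound {d : ℕ} (f : EuclideanSpace ℝ (Fin d) → ℝ)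
    (hconv : ConvexOn ℝ Set.univ f) (hdiff : Differentiable ℝ f)
    (x y : EuclideanSpace ℝ (Fin d)) :
    f x + ⟪gradient f x, y - x⟫ ≤ f y := by
  set g : ℝ → ℝ := fun t => f (x + t • (y - x)) with hg
  have hga : ConvexOn ℝ Set.univ g := by
    have := hconv.comp_affineMap (AffineMap.lineMap x y : ℝ →ᵃ[ℝ] _)
    have heq : (f ∘ (AffineMap.lineMap x y : ℝ →ᵃ[ℝ] _)) = g := by
      funext t
      simp [hg, AffineMap.lineMap_apply, add_comm]
    rw [heq] at this
    simpa using this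
  have hc : ∀ t : ℝ, HasDerivAt (fun s : ℝ => x + s • (y - x)) (y - x) t := by
    intro t
    simpa using ((hasDerivAt_id t).smul_const (y - x)).const_add x
  have h0 : HasDerivAt g (fderiv ℝ f x (y - x)) 0 := by
    have := (hdiff (x + (0:ℝ) • (y - x))).hasFDerivAt.comp_hasDerivAt 0 (hc 0)
    simp only [zero_smul, add_zero] at this
    exact this
  have hslope : fderiv ℝ f x (y - x) ≤ slope g 0 1 :=
    hga.le_slope_of_hasDerivAt (Set.mem_univ _) (Set.mem_univ _) one_pos h0
  have hsl : slope g 0 1 = f y - f x := by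
    simp [slope, hg]
  rw [hsl] at hslope
  rw [inner_gradient_eq_fderiv]
  linarith

theorem descent_implies_lipschitz_gradient (d : ℕ) (L : ℝ) (hL : 0 < L)
    (f : EuclideanSpace ℝ (Fin d) → ℝ)
    (hconv : ConvexOn ℝ Set.univ f) (hdiff : Differentiable ℝ f)
    (hdesc : ∀ y₁ y₂ : EuclideanSpace ℝ (Fin d),
      f y₂ ≤ f y₁ + ⟪gradient f y₁, y₂ - y₁⟫ + L / 2 * ‖y₁ - y₂‖ ^ 2) :
    LipschitzWith (Real.toNNReal L) (gradient f) := by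
  set g := gradient f with hgdef
  -- key inequality
  have key : ∀ x y : EuclideanSpace ℝ (Fin d),
      f x + ⟪g x, y - x⟫ + 1 / (2 * L) * ‖g y - g x‖ ^ 2 ≤ f y := by
    intro x y
    obtain ⟨ε, hε, hεL⟩ : ∃ ε : ℝ, 0 < ε ∧ L * ε = 1 := ⟨1 / L, by positivity, by field_simp⟩
    set w : EuclideanSpace ℝ (Fin d) := g y - g x with hw
    set z : EuclideanSpace ℝ (Fin d) := y - ε • w with hz
    have h1 := hdesc y z
    have h2 := convex_lower_bound f hconv hdiff x z
    rw [← hgdef] at h2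
    have hzy : z - y = -(ε • w) := by rw [hz]; abel
    have einner : ⟪g y, w⟫ - ⟪g x, w⟫ = ‖w‖ ^ 2 := by
      rw [← inner_sub_left, ← hw, real_inner_self_eq_norm_sq]
    have e1 : ⟪g y, z - y⟫ = -ε * ⟪g y, w⟫ := by
      rw [hzy, inner_neg_right, real_inner_smul_right]; ring
    have e2 : ‖y - z‖ ^ 2 = ε ^ 2 * ‖w‖ ^ 2 := by
      have hyz : y - z = ε • w := by rw [hz]; abel
      rw [hyz, norm_smul, mul_pow]
      simp [abs_of_pos hε]
    have e3 : ⟪g x, z - x⟫ = ⟪g x, y - x⟫ - ε * ⟪g x, w⟫ := by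
      have hzx : z - x = (y - x) + (z - y) := by abel
      rw [hzx, inner_add_right, hzy, inner_neg_right, real_inner_smul_right]; ring
    rw [e1, e2] at h1
    rw [e3] at h2
    have hsimp : L / 2 * (ε ^ 2 * ‖w‖ ^ 2) = ε / 2 * ‖w‖ ^ 2 := by
      have : L / 2 * (ε ^ 2 * ‖w‖ ^ 2) = (L * ε) * (ε * ‖w‖ ^ 2) / 2 := by ring
      rw [this, hεL]; ring
    rw [hsimp] at h1
    have heinn : ε * ⟪g y, w⟫ - ε * ⟪g x, w⟫ = ε * ‖w‖ ^ 2 := by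
      linear_combination ε * einner
    have hεeq : ε = 1 / L := eq_one_div_of_mul_eq_one_left (by rw [mul_comm] at hεL; exact hεL)
    have hhalf : 1 / (2 * L) * ‖w‖ ^ 2 = ε / 2 * ‖w‖ ^ 2 := by
      rw [hεeq]; field_simp
    rw [hhalf]
    linarith [h1, h2, heinn]
  -- co-coercivity
  have coco : ∀ x y : EuclideanSpace ℝ (Fin d),
      ‖g y - g x‖ ^ 2 ≤ L * ⟪g y - g x, y - x⟫ := by
    intro x y
    have h1 := key x y
    have h2 := key y x
    have hn : ‖g x - g y‖ = ‖g y - g x‖ := by rw [← neg_sub, norm_neg]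
    rw [hn] at h2
    have e : ⟪g x, y - x⟫ + ⟪g y, x - y⟫ = -⟪g y - g x, y - x⟫ := by
      rw [inner_sub_left]
      have hxy : (x - y : EuclideanSpace ℝ (Fin d)) = -(y - x) := by abel
      rw [hxy, inner_neg_right]
      ring
    have hsum : 2 * (1 / (2 * L) * ‖g y - g x‖ ^ 2) ≤ ⟪g y - g x, y - x⟫ := by
      linarith [h1, h2, e]
    have hscale : ‖g y - g x‖ ^ 2 = L * (2 * (1 / (2 * L) * ‖g y - g x‖ ^ 2)) := by
      field_simp
    rw [hscale]
    exact mul_le_mul_of_nonneg_left hsum hL.le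
  apply LipschitzWith.of_dist_le_mul
  intro x y
  rw [dist_eq_norm, dist_eq_norm, Real.coe_toNNReal _ hL.le]
  have h := coco y x
  have hcs : ⟪g x - g y, x - y⟫ ≤ ‖g x - g y‖ * ‖x - y‖ := real_inner_le_norm _ _
  by_cases h0 : ‖g x - g y‖ = 0
  · rw [h0]; positivity
  · have hpos : 0 < ‖g x - g y‖ := lt_of_le_of_ne (norm_nonneg _) (Ne.symm h0)
    have hle : ‖g x - g y‖ ^ 2 ≤ L * (‖g x - g y‖ * ‖x - y‖) :=
      h.trans (mul_le_mul_of_nonneg_left hcs hL.le)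
    nlinarith [hpos]
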